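/- Let G be an affine reductive algebraic group over an algebraically closed field k of characteristic zero and X a closed G-invariant subvariety of G^N, with G acting diagonally by simultaneous conjugation. For every x ∈ X, the subgroup H_x is completely reducible in G if and only if the subgroup φ_x is completely reducible in G. -/

import Mathlib

open scoped MatrixGroups

namespace PaperGIT

variable {k : Type} [Field k]

/-- The zero locus in affine space `k^σ` of a set of polynomials. -/
def zeroLocus {σ : Type} (I : Set (MvPolynomial σ k)) : Set (σ → k) :=
  {x | ∀ f ∈ I, MvPolynomial.eval x f = 0}

/-- A subset of affine space is Zariski closed if it is the zero locus of a set
of polynomials. -/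
def IsZClosed {σ : Type} (S : Set (σ → k)) : Prop :=
  ∃ I : Set (MvPolynomial σ k), S = zeroLocus I

/-- The Zariski closure of a subset of affine space. -/
def zClosure {σ : Type} (S : Set (σ → k)) : Set (σ → k) :=
  ⋂₀ {C | IsZClosed C ∧ S ⊆ C}

/-- A matrix viewed as a point of affine space. -/
def mat2pt {n : ℕ} (A : Matrix (Fin n) (Fin n) k) : Fin n × Fin n → k :=
  fun p => A p.1 p.2

/-- An affine algebraic group over `k`, realized (as is always possible) as a
Zariski closed subgroup of some `GL n k`. -/
structure AlgGroup (k : Type) [Field k] where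
  n : ℕ
  toSubgroup : Subgroup (GL (Fin n) k)
  closed : ∃ I : Set (MvPolynomial (Fin n × Fin n) k),
    ∀ A : GL (Fin n) k, A ∈ toSubgroup ↔
      mat2pt (A : Matrix (Fin n) (Fin n) k) ∈ zeroLocus I

/-- A one-parameter subgroup (cocharacter) of `G`: a group homomorphism
`k^× → G` whose matrix entries are Laurent polynomials in the parameter. -/
structure OnePS (G : AlgGroup k) where
  toFun : kˣ →* GL (Fin G.n) k
  mem : ∀ t : kˣ, toFun t ∈ G.toSubgroup
  regular : ∃ p : Fin G.n × Fin G.n → MvPolynomial Bool k,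
    ∀ (t : kˣ) (ij : Fin G.n × Fin G.n),
      (toFun t : Matrix (Fin G.n) (Fin G.n) k) ij.1 ij.2 =
        MvPolynomial.eval (fun b => if b then (t : k) else ((t⁻¹ : kˣ) : k)) (p ij)

/-- `GLimit lam g h` says that the morphism `t ↦ lam(t) * g * lam(t)⁻¹` of `k^×`
into `G` extends to a morphism `k → G` with value `h` at `t = 0`; i.e. that
`lam⁺g = lim_{t→0} lam(t) g lam(t)⁻¹` exists and equals `h`. -/
def GLimit {G : AlgGroup k} (lam : OnePS G) (g h : GL (Fin G.n) k) : Prop :=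
  h ∈ G.toSubgroup ∧
  ∃ q : Fin G.n × Fin G.n → Polynomial k,
    (∀ (t : kˣ) (ij : Fin G.n × Fin G.n),
      ((lam.toFun t * g * (lam.toFun t)⁻¹ : GL (Fin G.n) k) :
          Matrix (Fin G.n) (Fin G.n) k) ij.1 ij.2 = (q ij).eval (t : k)) ∧
    ∀ ij : Fin G.n × Fin G.n,
      (h : Matrix (Fin G.n) (Fin G.n) k) ij.1 ij.2 = (q ij).eval 0

/-- The R-parabolic subgroup `P(λ) = {g ∈ G : lim_{t→0} λ(t) g λ(t)⁻¹ exists}`. -/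
def Pset {G : AlgGroup k} (lam : OnePS G) : Set (GL (Fin G.n) k) :=
  {g | g ∈ G.toSubgroup ∧ ∃ h, GLimit lam g h}

/-- The R-Levi subgroup `L(λ) = {g ∈ G : lim_{t→0} λ(t) g λ(t)⁻¹ = g}`. -/
def Lset {G : AlgGroup k} (lam : OnePS G) : Set (GL (Fin G.n) k) :=
  {g | g ∈ G.toSubgroup ∧ GLimit lam g g}

/-- `L` is an R-Levi subgroup of the R-parabolic subgroup `P`, i.e. `L = L(μ)`
for some one-parameter subgroup `μ` with `P(μ) = P`. -/
def IsRLeviOf {G : AlgGroup k} (L P : Set (GL (Fin G.n) k)) : Prop :=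
  ∃ mu : OnePS G, Pset mu = P ∧ Lset mu = L

/-- `P` is an R-parabolic subgroup of `G`. -/
def IsRParabolic {G : AlgGroup k} (P : Set (GL (Fin G.n) k)) : Prop :=
  ∃ lam : OnePS G, P = Pset lam

/-- Two one-parameter subgroups are opposite if `P(λ) ∩ P(λ')` is an R-Levi
subgroup of both `P(λ)` and `P(λ')`. -/
def AreOpposite {G : AlgGroup k} (lam lam' : OnePS G) : Prop :=
  IsRLeviOf (Pset lam ∩ Pset lam') (Pset lam) ∧
  IsRLeviOf (Pset lam ∩ Pset lam') (Pset lam')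

/-- A subgroup (given as a subset) `H ⊆ G` is completely reducible in `G` if
every R-parabolic subgroup of `G` containing `H` has an R-Levi subgroup
containing `H`. -/
def CompletelyReducible (G : AlgGroup k) (H : Set (GL (Fin G.n) k)) : Prop :=
  ∀ lam : OnePS G, H ⊆ Pset lam →
    ∃ L : Set (GL (Fin G.n) k), IsRLeviOf L (Pset lam) ∧ H ⊆ L

/-- A subgroup (given as a subset) `H ⊆ G` is irreducible in `G` if it is not
contained in any proper R-parabolic subgroup of `G`. -/
def IrreducibleIn (G : AlgGroup k) (H : Set (GL (Fin G.n) k)) : Prop :=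
  ∀ lam : OnePS G, H ⊆ Pset lam → Pset lam = (G.toSubgroup : Set (GL (Fin G.n) k))

/-- The center `Z(G)` of `G`, as a subset. -/
def centerSet (G : AlgGroup k) : Set (GL (Fin G.n) k) :=
  {g | g ∈ G.toSubgroup ∧ ∀ h ∈ G.toSubgroup, g * h = h * g}

/-- The centralizer `Z_G(H)` of a subset `H` in `G`. -/
def centralizerSet (G : AlgGroup k) (H : Set (GL (Fin G.n) k)) :
    Set (GL (Fin G.n) k) :=
  {g | g ∈ G.toSubgroup ∧ ∀ h ∈ H, g * h = h * g}

/-- A subset of `GL n k` which is Zariski closed in `GL n k` (with the subspace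
topology coming from the space of matrices). -/
def ClosedInGL {n : ℕ} (S : Set (GL (Fin n) k)) : Prop :=
  ∃ I : Set (MvPolynomial (Fin n × Fin n) k),
    S = {A : GL (Fin n) k | mat2pt (A : Matrix (Fin n) (Fin n) k) ∈ zeroLocus I}

/-- Zariski connectedness (preconnectedness) of a subset of `GL n k`. -/
def IsConnSet {n : ℕ} (T : Set (GL (Fin n) k)) : Prop :=
  ∀ V W : Set (GL (Fin n) k), ClosedInGL V → ClosedInGL W →
    T ⊆ V ∪ W → T ∩ V ∩ W = ∅ → T ⊆ V ∨ T ⊆ W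

/-- The connected component of the identity of `G`. -/
def idComponent (G : AlgGroup k) : Set (GL (Fin G.n) k) :=
  ⋃₀ {C | C ⊆ (G.toSubgroup : Set (GL (Fin G.n) k)) ∧
      (1 : GL (Fin G.n) k) ∈ C ∧ IsConnSet C}

/-- A unipotent element of `GL n k`. -/
def IsUnipotentEl {n : ℕ} (A : GL (Fin n) k) : Prop :=
  ((A : Matrix (Fin n) (Fin n) k) - 1) ^ n = 0

/-- `G` is reductive: the unipotent radical of the identity component `G⁰` is
trivial, i.e. every connected normal subgroup of `G⁰` consisting of unipotent
elements is trivial. -/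
def IsReductive (G : AlgGroup k) : Prop :=
  ∀ H : Set (GL (Fin G.n) k),
    H ⊆ idComponent G → (1 : GL (Fin G.n) k) ∈ H →
    (∀ a ∈ H, ∀ b ∈ H, a * b ∈ H) → (∀ a ∈ H, a⁻¹ ∈ H) →
    (∀ g ∈ idComponent G, ∀ h ∈ H, g * h * g⁻¹ ∈ H) →
    IsConnSet H → (∀ h ∈ H, IsUnipotentEl h) →
    H = {1}

/-- A semisimple (diagonalizable) element of `GL n k`. -/
def IsSemisimpleEl {n : ℕ} (A : GL (Fin n) k) : Prop :=
  ∃ P : GL (Fin n) k,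
    ((P * A * P⁻¹ : GL (Fin n) k) : Matrix (Fin n) (Fin n) k).IsDiag

/-- A torus in `G`: a Zariski closed connected commutative subgroup all of
whose elements are semisimple. -/
def IsTorusIn (G : AlgGroup k) (T : Set (GL (Fin G.n) k)) : Prop :=
  T ⊆ (G.toSubgroup : Set (GL (Fin G.n) k)) ∧ (1 : GL (Fin G.n) k) ∈ T ∧
  (∀ a ∈ T, ∀ b ∈ T, a * b ∈ T) ∧ (∀ a ∈ T, a⁻¹ ∈ T) ∧
  ClosedInGL T ∧ IsConnSet T ∧
  (∀ a ∈ T, ∀ b ∈ T, a * b = b * a) ∧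
  (∀ a ∈ T, IsSemisimpleEl a)

/-- A maximal torus of `G`. -/
def IsMaximalTorusIn (G : AlgGroup k) (T : Set (GL (Fin G.n) k)) : Prop :=
  IsTorusIn G T ∧ ∀ T' : Set (GL (Fin G.n) k), IsTorusIn G T' → T ⊆ T' → T' = T

/-- A morphism of affine algebraic groups: a group homomorphism on the points
of `G` whose matrix entries are regular functions on `G`. -/
structure AlgGroupHom (G G' : AlgGroup k) where
  toFun : GL (Fin G.n) k → GL (Fin G'.n) k
  mem : ∀ g ∈ G.toSubgroup, toFun g ∈ G'.toSubgroup
  map_one : toFun 1 = 1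
  map_mul : ∀ g ∈ G.toSubgroup, ∀ h ∈ G.toSubgroup, toFun (g * h) = toFun g * toFun h
  regular : ∃ p : Fin G'.n × Fin G'.n → MvPolynomial ((Fin G.n × Fin G.n) ⊕ Unit) k,
    ∀ g ∈ G.toSubgroup, ∀ ij : Fin G'.n × Fin G'.n,
      (toFun g : Matrix (Fin G'.n) (Fin G'.n) k) ij.1 ij.2 =
        MvPolynomial.eval
          (Sum.elim (mat2pt (g : Matrix (Fin G.n) (Fin G.n) k))
            (fun _ => ((g⁻¹ : GL (Fin G.n) k) : Matrix (Fin G.n) (Fin G.n) k).det))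
          (p ij)

/-- Surjectivity of a morphism of algebraic groups (onto the points of `G'`). -/
def AlgGroupHom.Surj {G G' : AlgGroup k} (f : AlgGroupHom G G') : Prop :=
  ∀ g' ∈ G'.toSubgroup, ∃ g ∈ G.toSubgroup, f.toFun g = g'

/-- An affine `G`-variety: a Zariski closed subset of affine space `k^m`
together with an algebraic (polynomially defined) action of `G`. -/
structure GVariety (G : AlgGroup k) (m : ℕ) where
  carrier : Set (Fin m → k)
  closed : IsZClosed carrier
  act : GL (Fin G.n) k → (Fin m → k) → (Fin m → k)
  act_mem : ∀ g ∈ G.toSubgroup, ∀ x ∈ carrier, act g x ∈ carrier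
  act_one : ∀ x ∈ carrier, act 1 x = x
  act_mul : ∀ g ∈ G.toSubgroup, ∀ h ∈ G.toSubgroup, ∀ x ∈ carrier,
    act (g * h) x = act g (act h x)
  regular : ∃ p : Fin m → MvPolynomial ((Fin G.n × Fin G.n) ⊕ (Unit ⊕ Fin m)) k,
    ∀ g ∈ G.toSubgroup, ∀ x ∈ carrier, ∀ i : Fin m,
      act g x i =
        MvPolynomial.eval
          (Sum.elim (mat2pt (g : Matrix (Fin G.n) (Fin G.n) k))
            (Sum.elim
              (fun _ => ((g⁻¹ : GL (Fin G.n) k) : Matrix (Fin G.n) (Fin G.n) k).det)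
              x))
          (p i)

/-- `XLimit X lam x y` : the `lam`-ray through `x`, `t ↦ lam(t)·x`, extends to
a morphism `k → X` with value `y` at `0`; i.e. `lam⁺x` exists and equals `y`. -/
def XLimit {G : AlgGroup k} {m : ℕ} (X : GVariety G m) (lam : OnePS G)
    (x y : Fin m → k) : Prop :=
  y ∈ X.carrier ∧
  ∃ q : Fin m → Polynomial k,
    (∀ (t : kˣ) (i : Fin m), X.act (lam.toFun t) x i = (q i).eval (t : k)) ∧
    ∀ i : Fin m, y i = (q i).eval 0

/-- `lam ∈ Λ_x` : the limit `lam⁺x` exists. -/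
def InLambda {G : AlgGroup k} {m : ℕ} (X : GVariety G m) (x : Fin m → k)
    (lam : OnePS G) : Prop :=
  ∃ y, XLimit X lam x y

/-- `H_x = ∩_{λ ∈ Λ_x} P(λ)`. -/
def Hx {G : AlgGroup k} {m : ℕ} (X : GVariety G m) (x : Fin m → k) :
    Set (GL (Fin G.n) k) :=
  {g | g ∈ G.toSubgroup ∧ ∀ lam : OnePS G, InLambda X x lam → g ∈ Pset lam}

/-- `Λ_x` is symmetric: every `λ ∈ Λ_x` admits an opposite `λ' ∈ Λ_x`. -/
def SymmetricLambda {G : AlgGroup k} {m : ℕ} (X : GVariety G m)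
    (x : Fin m → k) : Prop :=
  ∀ lam : OnePS G, InLambda X x lam →
    ∃ lam' : OnePS G, InLambda X x lam' ∧ AreOpposite lam lam'

/-- The map `η : X → S(G)`, `x ↦ H_x`, is proper: `H_x ⊆ P(λ)` implies `λ ∈ Λ_x`. -/
def EtaProper {G : AlgGroup k} {m : ℕ} (X : GVariety G m) : Prop :=
  ∀ x ∈ X.carrier, ∀ lam : OnePS G, Hx X x ⊆ Pset lam → InLambda X x lam

/-- The `G`-orbit of `x`. -/
def orbitSet {G : AlgGroup k} {m : ℕ} (X : GVariety G m) (x : Fin m → k) :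
    Set (Fin m → k) :=
  {y | ∃ g ∈ G.toSubgroup, y = X.act g x}

/-- `x` is polystable: its `G`-orbit is Zariski closed. -/
def Polystable {G : AlgGroup k} {m : ℕ} (X : GVariety G m) (x : Fin m → k) : Prop :=
  IsZClosed (orbitSet X x)

/-- The stabilizer `G_x` of `x`, as a subset of `G`. -/
def stabSet {G : AlgGroup k} {m : ℕ} (X : GVariety G m) (x : Fin m → k) :
    Set (GL (Fin G.n) k) :=
  {g | g ∈ G.toSubgroup ∧ X.act g x = x}

/-- The center of the action, `G_X = ∩_{x ∈ X} G_x`. -/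
def actionCenter {G : AlgGroup k} {m : ℕ} (X : GVariety G m) :
    Set (GL (Fin G.n) k) :=
  {g | g ∈ G.toSubgroup ∧ ∀ x ∈ X.carrier, X.act g x = x}

/-- `x` is stable: polystable and `G_x/G_X` is finite (finitely many cosets
`g·G_X` with `g ∈ G_x`). -/
def Stable {G : AlgGroup k} {m : ℕ} (X : GVariety G m) (x : Fin m → k) : Prop :=
  Polystable X x ∧
  Set.Finite ((fun g => (fun h => g * h) '' actionCenter X) '' stabSet X x)

/-- `x` is properly stable: polystable with finite stabilizer. -/
def ProperlyStable {G : AlgGroup k} {m : ℕ} (X : GVariety G m) (x : Fin m → k) : Prop :=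
  Polystable X x ∧ (stabSet X x).Finite

/-- `x` is equicentral: polystable and `G_x = G_X`. -/
def Equicentral {G : AlgGroup k} {m : ℕ} (X : GVariety G m) (x : Fin m → k) : Prop :=
  Polystable X x ∧ stabSet X x = actionCenter X

/-- `x` is 1PS stable: polystable, and for every one-parameter subgroup `λ`
of `G` with `λ(k^×) ⊄ G_X` the limit `λ⁺x` does not exist. -/
def OnePSStable {G : AlgGroup k} {m : ℕ} (X : GVariety G m) (x : Fin m → k) : Prop :=
  Polystable X x ∧
  ∀ lam : OnePS G, ¬ (∀ t : kˣ, lam.toFun t ∈ actionCenter X) → ¬ InLambda X x lam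

/-- The weight space of weight `n ∈ ℤ` for the 1PS `lam` acting on `k^m`. -/
def weightSpace {G : AlgGroup k} {m : ℕ} (X : GVariety G m) (lam : OnePS G)
    (n : ℤ) : Set (Fin m → k) :=
  {w | ∀ t : kˣ, X.act (lam.toFun t) w = (((t ^ n : kˣ) : k)) • w}

/-- `μ(v, lam) = μ0`: decomposing `v` into nonzero weight vectors for `lam`,
the minimal occurring weight equals `μ0`. -/
def MuIs {G : AlgGroup k} {m : ℕ} (X : GVariety G m) (lam : OnePS G)
    (v : Fin m → k) (μ0 : ℤ) : Prop :=
  ∃ (s : Finset ℤ) (c : ℤ → (Fin m → k)),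
    (∀ n ∈ s, c n ∈ weightSpace X lam n ∧ c n ≠ 0) ∧
    v = ∑ n ∈ s, c n ∧ μ0 ∈ s ∧ ∀ n ∈ s, μ0 ≤ n

/-- `GL n k` itself, as an affine algebraic group. -/
def fullGL (k : Type) [Field k] (n : ℕ) : AlgGroup k where
  n := n
  toSubgroup := ⊤
  closed := ⟨∅, by intro A; simp [zeroLocus]⟩

/-- A subset `X ⊆ G^N` which is Zariski closed in `G^N`. -/
def GNClosed (G : AlgGroup k) (N : ℕ)
    (S : Set (Fin N → GL (Fin G.n) k)) : Prop :=
  ∃ I : Set (MvPolynomial (Fin N × (Fin G.n × Fin G.n)) k),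
    S = {x | (∀ i, x i ∈ G.toSubgroup) ∧
          ∀ f ∈ I, MvPolynomial.eval
            (fun p => ((x p.1 : Matrix (Fin G.n) (Fin G.n) k) p.2.1 p.2.2)) f = 0}

/-- Limits of the `lam`-ray through `x ∈ X ⊆ G^N`, for the simultaneous
conjugation action. -/
def GNLimit {G : AlgGroup k} {N : ℕ} (X : Set (Fin N → GL (Fin G.n) k))
    (lam : OnePS G) (x y : Fin N → GL (Fin G.n) k) : Prop :=
  y ∈ X ∧
  ∃ q : Fin N → Fin G.n × Fin G.n → Polynomial k,
    (∀ (t : kˣ) (i : Fin N) (ij : Fin G.n × Fin G.n),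
      ((lam.toFun t * x i * (lam.toFun t)⁻¹ : GL (Fin G.n) k) :
          Matrix (Fin G.n) (Fin G.n) k) ij.1 ij.2 = (q i ij).eval (t : k)) ∧
    ∀ (i : Fin N) (ij : Fin G.n × Fin G.n),
      (y i : Matrix (Fin G.n) (Fin G.n) k) ij.1 ij.2 = (q i ij).eval 0

/-- `lam ∈ Λ_x` for `x ∈ X ⊆ G^N`. -/
def GNInLambda {G : AlgGroup k} {N : ℕ} (X : Set (Fin N → GL (Fin G.n) k))
    (x : Fin N → GL (Fin G.n) k) (lam : OnePS G) : Prop :=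
  ∃ y, GNLimit X lam x y

/-- `H_x` for `x ∈ X ⊆ G^N`. -/
def GNHx {G : AlgGroup k} {N : ℕ} (X : Set (Fin N → GL (Fin G.n) k))
    (x : Fin N → GL (Fin G.n) k) : Set (GL (Fin G.n) k) :=
  {g | g ∈ G.toSubgroup ∧ ∀ lam : OnePS G, GNInLambda X x lam → g ∈ Pset lam}

/-- `φ_x`: the subgroup of `G` generated by the components of `x ∈ G^N`. -/
def phiSet {G : AlgGroup k} {N : ℕ} (x : Fin N → GL (Fin G.n) k) :
    Set (GL (Fin G.n) k) :=
  (Subgroup.closure (Set.range x) : Subgroup (GL (Fin G.n) k))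

/-- The orbit of `x ∈ G^N` under simultaneous conjugation. -/
def GNOrbit {G : AlgGroup k} {N : ℕ} (x : Fin N → GL (Fin G.n) k) :
    Set (Fin N → GL (Fin G.n) k) :=
  {y | ∃ g ∈ G.toSubgroup, y = fun i => g * x i * g⁻¹}

/-- Polystability of `x ∈ X ⊆ G^N`: the conjugation orbit is Zariski closed. -/
def GNPolystable (G : AlgGroup k) {N : ℕ} (x : Fin N → GL (Fin G.n) k) : Prop :=
  GNClosed G N (GNOrbit x)

/-- The stabilizer of `x ∈ G^N` under simultaneous conjugation. -/
def GNStab (G : AlgGroup k) {N : ℕ} (x : Fin N → GL (Fin G.n) k) :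
    Set (GL (Fin G.n) k) :=
  {g | g ∈ G.toSubgroup ∧ ∀ i, g * x i * g⁻¹ = x i}

/-- `G_X` for `X ⊆ G^N` with the simultaneous conjugation action. -/
def GNActionCenter (G : AlgGroup k) {N : ℕ}
    (X : Set (Fin N → GL (Fin G.n) k)) : Set (GL (Fin G.n) k) :=
  {g | g ∈ G.toSubgroup ∧ ∀ x ∈ X, ∀ i, g * x i * g⁻¹ = x i}

/-- `x ∈ X ⊆ G^N` is stable: polystable and `G_x/G_X` finite. -/
def GNStable (G : AlgGroup k) {N : ℕ} (X : Set (Fin N → GL (Fin G.n) k))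
    (x : Fin N → GL (Fin G.n) k) : Prop :=
  GNPolystable G x ∧
  Set.Finite ((fun g => (fun h => g * h) '' GNActionCenter G X) '' GNStab G x)

/-- `x ∈ X ⊆ G^N` is equicentral: polystable and `G_x = G_X`. -/
def GNEquicentral (G : AlgGroup k) {N : ℕ} (X : Set (Fin N → GL (Fin G.n) k))
    (x : Fin N → GL (Fin G.n) k) : Prop :=
  GNPolystable G x ∧ GNStab G x = GNActionCenter G X

/-- A subgroup `H ⊆ G` is isotropic: completely reducible with `Z_G(H) = Z(G)`. -/
def IsIsotropic (G : AlgGroup k) (H : Set (GL (Fin G.n) k)) : Prop :=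
  CompletelyReducible G H ∧ centralizerSet G H = centerSet G


section Aux

open Polynomial

lemma poly_eq_of_eval_units [Infinite k] {p q : Polynomial k}
    (h : ∀ t : kˣ, p.eval (t : k) = q.eval (t : k)) : p = q := by
  apply Polynomial.eq_of_infinite_eval_eq
  apply Set.Infinite.mono (s := {x : k | x ≠ 0})
  · intro x hx
    simpa using h (Units.mk0 x hx)
  · have hf : ({0} : Set k).Finite := Set.finite_singleton 0
    have h2 := hf.infinite_compl
    have h3 : ({0}ᶜ : Set k) = {x : k | x ≠ 0} := by ext y; simp
    rwa [h3] at h2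

lemma poly_const_of_inv [Infinite k] (q r : Polynomial k)
    (h : ∀ t : kˣ, q.eval (t : k) = r.eval ((t⁻¹ : kˣ) : k)) :
    q = Polynomial.C (q.coeff 0) := by
  by_cases hq : q = 0
  · simp [hq]
  set m := r.natDegree with hm
  set P : Polynomial k :=
    ∑ i ∈ Finset.range (m + 1), Polynomial.C (r.coeff i) * Polynomial.X ^ (m - i) with hP
  have key : Polynomial.X ^ m * q = P := by
    apply poly_eq_of_eval_units
    intro t
    have ht : (t : k) ≠ 0 := t.ne_zero
    have hr : r.eval ((t⁻¹ : kˣ) : k) =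
        ∑ i ∈ Finset.range (m + 1), r.coeff i * ((t : k)⁻¹) ^ i := by
      rw [Polynomial.eval_eq_sum_range]
      simp
      rfl
    rw [Polynomial.eval_mul, Polynomial.eval_pow, Polynomial.eval_X, h t, hr, hP,
      Polynomial.eval_finset_sum, Finset.mul_sum]
    apply Finset.sum_congr rfl
    intro i hi
    have him : i ≤ m := Nat.lt_succ_iff.mp (Finset.mem_range.mp hi)
    rw [Polynomial.eval_mul, Polynomial.eval_C, Polynomial.eval_pow, Polynomial.eval_X,
      pow_sub₀ _ ht him, inv_pow]
    ring
  have hdeg : m + q.natDegree ≤ m := by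
    have h1 : (Polynomial.X ^ m * q).natDegree = m + q.natDegree := by
      rw [Polynomial.natDegree_mul (pow_ne_zero _ Polynomial.X_ne_zero) hq]
      simp
    have h2 : P.natDegree ≤ m := by
      apply Polynomial.natDegree_sum_le_of_forall_le
      intro i hi
      apply le_trans (Polynomial.natDegree_C_mul_le _ _)
      simp only [Polynomial.natDegree_X_pow]
      omega
    rw [← key] at h2
    omega
  have hq0 : q.natDegree = 0 := by omega
  exact Polynomial.eq_C_of_natDegree_eq_zero hq0

variable {G : AlgGroup k}

/-- The inverse of a one-parameter subgroup. -/
def invOnePS (mu : OnePS G) : OnePS G where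
  toFun := mu.toFun.comp (invMonoidHom : kˣ →* kˣ)
  mem t := mu.mem _
  regular := by
    obtain ⟨p, hp⟩ := mu.regular
    refine ⟨fun ij => MvPolynomial.rename Bool.not (p ij), fun t ij => ?_⟩
    have h1 := hp t⁻¹ ij
    rw [MvPolynomial.eval_rename]
    have h2 : ((fun b => if b then (t : k) else ((t⁻¹ : kˣ) : k)) ∘ Bool.not) =
        (fun b => if b then ((t⁻¹ : kˣ) : k) else (((t⁻¹)⁻¹ : kˣ) : k)) := by
      funext b
      cases b <;> simp
    rw [h2, ← h1]
    rfl

lemma one_mem_Pset (lam : OnePS G) : (1 : GL (Fin G.n) k) ∈ Pset lam := by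
  refine ⟨G.toSubgroup.one_mem, 1, G.toSubgroup.one_mem,
    fun ij => Polynomial.C (((1 : GL (Fin G.n) k) : Matrix (Fin G.n) (Fin G.n) k) ij.1 ij.2),
    fun t ij => ?_, fun ij => by simp⟩
  have : lam.toFun t * 1 * (lam.toFun t)⁻¹ = 1 := by group
  rw [this, Polynomial.eval_C]

lemma mul_mem_Pset {lam : OnePS G} {a b : GL (Fin G.n) k}
    (ha : a ∈ Pset lam) (hb : b ∈ Pset lam) : a * b ∈ Pset lam := by
  obtain ⟨haG, h₁, hh₁G, q₁, hq₁, hq₁0⟩ := ha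
  obtain ⟨hbG, h₂, hh₂G, q₂, hq₂, hq₂0⟩ := hb
  refine ⟨G.toSubgroup.mul_mem haG hbG, h₁ * h₂, G.toSubgroup.mul_mem hh₁G hh₂G,
    fun ij => ∑ c : Fin G.n, q₁ (ij.1, c) * q₂ (c, ij.2), fun t ij => ?_, fun ij => ?_⟩
  · have hsplit : lam.toFun t * (a * b) * (lam.toFun t)⁻¹ =
        (lam.toFun t * a * (lam.toFun t)⁻¹) * (lam.toFun t * b * (lam.toFun t)⁻¹) := by group
    rw [hsplit, Units.val_mul, Matrix.mul_apply, Polynomial.eval_finset_sum]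
    exact Finset.sum_congr rfl fun c _ => by
      rw [Polynomial.eval_mul, hq₁ t (ij.1, c), hq₂ t (c, ij.2)]
  · rw [Units.val_mul, Matrix.mul_apply, Polynomial.eval_finset_sum]
    exact Finset.sum_congr rfl fun c _ => by
      rw [Polynomial.eval_mul, ← hq₁0 (ij.1, c), ← hq₂0 (c, ij.2)]

lemma inv_mem_Pset [Infinite k] {lam : OnePS G} {a : GL (Fin G.n) k}
    (ha : a ∈ Pset lam) : a⁻¹ ∈ Pset lam := by
  obtain ⟨haG, h, hhG, q, hq, hq0⟩ := ha
  set Q : Matrix (Fin G.n) (Fin G.n) (Polynomial k) := Matrix.of fun i j => q (i, j) with hQ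
  have hQmap : ∀ t : kˣ, Q.map (Polynomial.eval (t : k)) =
      ((lam.toFun t * a * (lam.toFun t)⁻¹ : GL (Fin G.n) k) : Matrix (Fin G.n) (Fin G.n) k) := by
    intro t
    ext i j
    simp only [Matrix.map_apply, hQ, Matrix.of_apply]
    exact (hq t (i, j)).symm
  have hQ0 : Q.map (Polynomial.eval (0 : k)) = (h : Matrix (Fin G.n) (Fin G.n) k) := by
    ext i j
    simp only [Matrix.map_apply, hQ, Matrix.of_apply]
    exact (hq0 (i, j)).symm
  have hmm : ∀ c : k, (Polynomial.evalRingHom c).mapMatrix Q = Q.map (Polynomial.eval c) :=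
    fun c => rfl
  have hdet : ∀ c : k, Q.det.eval c = (Q.map (Polynomial.eval c)).det := by
    intro c
    have h1 := (Polynomial.evalRingHom c).map_det Q
    rw [Polynomial.coe_evalRingHom] at h1
    rw [h1, hmm c]
  have hadj : ∀ c : k, Q.adjugate.map (Polynomial.eval c) =
      (Q.map (Polynomial.eval c)).adjugate := by
    intro c
    have h1 := (Polynomial.evalRingHom c).map_adjugate Q
    rw [hmm c] at h1
    exact h1
  set d : k := ((a : Matrix (Fin G.n) (Fin G.n) k)).det with hd
  have hdet_t : ∀ t : kˣ, Q.det.eval (t : k) = d := by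
    intro t
    rw [hdet, hQmap t, Units.val_mul, Units.val_mul, Matrix.det_mul, Matrix.det_mul,
      Matrix.coe_units_inv, Matrix.det_nonsing_inv, Ring.inverse_eq_inv']
    have hAu : ((lam.toFun t : Matrix (Fin G.n) (Fin G.n) k)).det ≠ 0 :=
      ((Matrix.isUnit_iff_isUnit_det _).mp (lam.toFun t).isUnit).ne_zero
    field_simp
    exact hd.symm
  have hQdet : Q.det = Polynomial.C d := by
    apply poly_eq_of_eval_units (q := Polynomial.C d)
    intro t
    rw [hdet_t t, Polynomial.eval_C]
  have hdet0 : (h : Matrix (Fin G.n) (Fin G.n) k).det = d := by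
    rw [← hQ0, ← hdet, hQdet, Polynomial.eval_C]
  have hMdet : ∀ t : kˣ, ((lam.toFun t * a * (lam.toFun t)⁻¹ : GL (Fin G.n) k) :
      Matrix (Fin G.n) (Fin G.n) k).det = d := by
    intro t
    rw [← hQmap t, ← hdet, hQdet, Polynomial.eval_C]
  refine ⟨G.toSubgroup.inv_mem haG, h⁻¹, G.toSubgroup.inv_mem hhG,
    fun ij => Polynomial.C d⁻¹ * Q.adjugate ij.1 ij.2, fun t ij => ?_, fun ij => ?_⟩
  · have hsplit : lam.toFun t * a⁻¹ * (lam.toFun t)⁻¹ =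
        (lam.toFun t * a * (lam.toFun t)⁻¹)⁻¹ := by group
    have hentry : (Q.adjugate ij.1 ij.2).eval (t : k) =
        ((lam.toFun t * a * (lam.toFun t)⁻¹ : GL (Fin G.n) k) :
          Matrix (Fin G.n) (Fin G.n) k).adjugate ij.1 ij.2 := by
      have h5 := hadj (t : k)
      rw [hQmap t] at h5
      have := congrFun (congrFun h5 ij.1) ij.2
      simpa using this
    rw [hsplit, Matrix.coe_units_inv, Matrix.inv_def, hMdet t, Ring.inverse_eq_inv',
      Matrix.smul_apply, Polynomial.eval_mul, Polynomial.eval_C, hentry, smul_eq_mul]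
  · have hentry : (Q.adjugate ij.1 ij.2).eval (0 : k) =
        (h : Matrix (Fin G.n) (Fin G.n) k).adjugate ij.1 ij.2 := by
      have h5 := hadj (0 : k)
      rw [hQ0] at h5
      have := congrFun (congrFun h5 ij.1) ij.2
      simpa using this
    rw [Matrix.coe_units_inv, Matrix.inv_def, hdet0, Ring.inverse_eq_inv', Matrix.smul_apply,
      Polynomial.eval_mul, Polynomial.eval_C, hentry, smul_eq_mul]

/-- `P(λ)` as a subgroup of `GL`. -/
def PsetSubgroup [Infinite k] (lam : OnePS G) : Subgroup (GL (Fin G.n) k) where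
  carrier := Pset lam
  one_mem' := one_mem_Pset lam
  mul_mem' := mul_mem_Pset
  inv_mem' := inv_mem_Pset

lemma commute_of_mem_Lset [Infinite k] {mu : OnePS G} {g : GL (Fin G.n) k}
    (hg : g ∈ Lset mu) (t0 : kˣ) : mu.toFun t0 * g = g * mu.toFun t0 := by
  obtain ⟨hgG, -, q, hq, hq0⟩ := hg
  set A : Matrix (Fin G.n) (Fin G.n) k := (mu.toFun t0 : Matrix (Fin G.n) (Fin G.n) k) with hA
  set B : Matrix (Fin G.n) (Fin G.n) k :=
    (((mu.toFun t0)⁻¹ : GL (Fin G.n) k) : Matrix (Fin G.n) (Fin G.n) k) with hB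
  set P : Fin G.n × Fin G.n → Polynomial k := fun ij =>
    ∑ b : Fin G.n, (∑ a : Fin G.n, Polynomial.C (A ij.1 a) * q (a, b)) * Polynomial.C (B b ij.2)
    with hPdef
  have hPs : ∀ (s : kˣ) (ij : Fin G.n × Fin G.n),
      (P ij).eval (s : k) = (q ij).eval ((t0 : k) * (s : k)) := by
    intro s ij
    have hcomb : mu.toFun t0 * (mu.toFun s * g * (mu.toFun s)⁻¹) * (mu.toFun t0)⁻¹ =
        mu.toFun (t0 * s) * g * (mu.toFun (t0 * s))⁻¹ := by
      rw [map_mul]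
      group
    have hq' := hq (t0 * s) ij
    rw [← hcomb] at hq'
    have hval : ((mu.toFun t0 * (mu.toFun s * g * (mu.toFun s)⁻¹) * (mu.toFun t0)⁻¹ :
          GL (Fin G.n) k) : Matrix (Fin G.n) (Fin G.n) k) ij.1 ij.2 =
        (A * ((mu.toFun s * g * (mu.toFun s)⁻¹ : GL (Fin G.n) k) :
          Matrix (Fin G.n) (Fin G.n) k) * B) ij.1 ij.2 := by
      rw [Units.val_mul, Units.val_mul]
    have hlhs : (P ij).eval (s : k) =
        (A * ((mu.toFun s * g * (mu.toFun s)⁻¹ : GL (Fin G.n) k) :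
          Matrix (Fin G.n) (Fin G.n) k) * B) ij.1 ij.2 := by
      rw [Matrix.mul_apply, hPdef]
      simp only [Polynomial.eval_finset_sum, Polynomial.eval_mul, Polynomial.eval_C]
      apply Finset.sum_congr rfl
      intro b _
      congr 1
      rw [Matrix.mul_apply]
      apply Finset.sum_congr rfl
      intro a _
      rw [← hq s (a, b)]
    rw [hlhs, ← hval, hq', Units.val_mul]
  have hPc : ∀ ij : Fin G.n × Fin G.n,
      P ij = (q ij).comp (Polynomial.C (t0 : k) * Polynomial.X) := by
    intro ij
    apply poly_eq_of_eval_units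
    intro s
    rw [Polynomial.eval_comp, Polynomial.eval_mul, Polynomial.eval_C, Polynomial.eval_X, hPs s ij]
  have hmat : A * (g : Matrix (Fin G.n) (Fin G.n) k) * B = (g : Matrix (Fin G.n) (Fin G.n) k) := by
    ext i j
    have h1 : (P (i, j)).eval (0 : k) = (A * (g : Matrix (Fin G.n) (Fin G.n) k) * B) i j := by
      rw [Matrix.mul_apply, hPdef]
      simp only [Polynomial.eval_finset_sum, Polynomial.eval_mul, Polynomial.eval_C]
      apply Finset.sum_congr rfl
      intro b _
      congr 1
      rw [Matrix.mul_apply]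
      apply Finset.sum_congr rfl
      intro a _
      rw [← hq0 (a, b)]
    have h2 : (P (i, j)).eval (0 : k) = (g : Matrix (Fin G.n) (Fin G.n) k) i j := by
      rw [hPc (i, j), Polynomial.eval_comp, Polynomial.eval_mul, Polynomial.eval_C,
        Polynomial.eval_X, mul_zero, ← hq0 (i, j)]
    rw [← h1, h2]
  have hu : mu.toFun t0 * g * (mu.toFun t0)⁻¹ = g := by
    apply Units.ext
    rw [Units.val_mul, Units.val_mul, ← hA, ← hB]
    exact hmat
  rw [mul_inv_eq_iff_eq_mul] at hu
  exact hu

lemma GNInLambda_of_commute {N : ℕ} {X : Set (Fin N → GL (Fin G.n) k)}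
    {x : Fin N → GL (Fin G.n) k} (hx : x ∈ X) {mu' : OnePS G}
    (hc : ∀ (i : Fin N) (t : kˣ), mu'.toFun t * x i = x i * mu'.toFun t) :
    GNInLambda X x mu' := by
  refine ⟨x, hx, fun i ij => Polynomial.C ((x i : Matrix (Fin G.n) (Fin G.n) k) ij.1 ij.2),
    fun t i ij => ?_, fun i ij => by simp⟩
  have h1 : mu'.toFun t * x i * (mu'.toFun t)⁻¹ = x i := by
    rw [hc i t]
    group
  rw [h1, Polynomial.eval_C]

lemma xi_mem_Pset {N : ℕ} {X : Set (Fin N → GL (Fin G.n) k)}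
    (hXcl : GNClosed G N X) {x : Fin N → GL (Fin G.n) k} (hx : x ∈ X)
    {lam : OnePS G} (h : GNInLambda X x lam) (i : Fin N) : x i ∈ Pset lam := by
  obtain ⟨I, hI⟩ := hXcl
  obtain ⟨y, hyX, q, hq, hq0⟩ := h
  have hxG : ∀ j, x j ∈ G.toSubgroup := by rw [hI] at hx; exact hx.1
  have hyG : ∀ j, y j ∈ G.toSubgroup := by rw [hI] at hyX; exact hyX.1
  exact ⟨hxG i, y i, hyG i, fun ij => q i ij, fun t ij => hq t i ij, fun ij => hq0 i ij⟩

lemma phi_subset_Hx [Infinite k] {N : ℕ} {X : Set (Fin N → GL (Fin G.n) k)}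
    (hXcl : GNClosed G N X) {x : Fin N → GL (Fin G.n) k} (hx : x ∈ X) :
    phiSet x ⊆ GNHx X x := by
  have hxG : ∀ j, x j ∈ G.toSubgroup := by
    obtain ⟨I, hI⟩ := hXcl
    rw [hI] at hx
    exact hx.1
  set K : Subgroup (GL (Fin G.n) k) :=
    { carrier := GNHx X x
      one_mem' := ⟨G.toSubgroup.one_mem, fun lam _ => one_mem_Pset lam⟩
      mul_mem' := fun ha hb => ⟨G.toSubgroup.mul_mem ha.1 hb.1,
        fun lam hl => mul_mem_Pset (ha.2 lam hl) (hb.2 lam hl)⟩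
      inv_mem' := fun ha => ⟨G.toSubgroup.inv_mem ha.1,
        fun lam hl => inv_mem_Pset (ha.2 lam hl)⟩ } with hK
  have hle : Subgroup.closure (Set.range x) ≤ K := by
    rw [Subgroup.closure_le]
    rintro g ⟨i, rfl⟩
    exact ⟨hxG i, fun lam hl => xi_mem_Pset hXcl hx hl i⟩
  exact fun g hg => hle hg

lemma InLambda_of_forall [Infinite k] {N : ℕ} {X : Set (Fin N → GL (Fin G.n) k)}
    (hXcl : GNClosed G N X)
    (hXinv : ∀ g ∈ G.toSubgroup, ∀ x ∈ X, (fun i => g * x i * g⁻¹) ∈ X)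
    {x : Fin N → GL (Fin G.n) k} (hx : x ∈ X) {lam : OnePS G}
    (h : ∀ i, x i ∈ Pset lam) : GNInLambda X x lam := by
  obtain ⟨I, hI⟩ := hXcl
  choose y hy using fun i => (h i).2
  choose q hq hq0 using fun i => (hy i).2
  refine ⟨y, ?_, q, fun t i ij => hq i t ij, fun i ij => hq0 i ij⟩
  rw [hI]
  refine ⟨fun i => (hy i).1, ?_⟩
  intro f hf
  set F : Polynomial k := MvPolynomial.eval₂ Polynomial.C (fun p => q p.1 p.2) f with hF
  have hFeval : ∀ c : k, F.eval c =
      MvPolynomial.eval (fun p => (q p.1 p.2).eval c) f := by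
    intro c
    have h1 := MvPolynomial.eval₂_comp_left (Polynomial.evalRingHom c) Polynomial.C
      (fun p => q p.1 p.2) f
    have h2 : (Polynomial.evalRingHom c).comp Polynomial.C = RingHom.id k := by
      ext a
      simp
    rw [h2] at h1
    rw [hF]
    show (Polynomial.evalRingHom c) (MvPolynomial.eval₂ Polynomial.C (fun p => q p.1 p.2) f) = _
    rw [h1, MvPolynomial.eval₂_id]
    rfl
  have hFt : ∀ t : kˣ, F.eval (t : k) = 0 := by
    intro t
    have hz := hXinv (lam.toFun t) (lam.mem t) x hx
    rw [hI] at hz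
    have h3 := hz.2 f hf
    rw [hFeval]
    rw [← h3]
    have h9 : (fun p : Fin N × (Fin G.n × Fin G.n) => (q p.1 p.2).eval ((t : k))) =
        fun p => ((lam.toFun t * x p.1 * (lam.toFun t)⁻¹ : GL (Fin G.n) k) :
          Matrix (Fin G.n) (Fin G.n) k) p.2.1 p.2.2 := by
      funext p
      exact (hq p.1 t p.2).symm
    rw [h9]
  have hF0 : F = 0 := by
    apply poly_eq_of_eval_units (q := 0)
    intro t
    rw [hFt t, Polynomial.eval_zero]
  have h4 := hFeval 0
  rw [hF0, Polynomial.eval_zero] at h4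
  have h5 : (fun p : Fin N × (Fin G.n × Fin G.n) =>
      ((y p.1 : Matrix (Fin G.n) (Fin G.n) k) p.2.1 p.2.2)) =
      (fun p => (q p.1 p.2).eval (0 : k)) := by
    funext p
    exact hq0 p.1 p.2
  rw [h5, ← h4]

end Aux

/-- Theorem 1.4 / Proposition 5.2 of the paper. Let `X` be
a closed `G`-invariant subvariety of `G^N` with the simultaneous conjugation
action. For every `x ∈ X`, `H_x` is completely reducible in `G` if and only if
`φ_x` is completely reducible in `G`. -/
theorem GNHx_cr_iff_phi_cr
    {k : Type} [Field k] [IsAlgClosed k] [CharZero k]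
    (G : AlgGroup k) (hG : IsReductive G)
    {N : ℕ} (X : Set (Fin N → GL (Fin G.n) k))
    (hXcl : GNClosed G N X)
    (hXinv : ∀ g ∈ G.toSubgroup, ∀ x ∈ X, (fun i => g * x i * g⁻¹) ∈ X)
    (x : Fin N → GL (Fin G.n) k) (hx : x ∈ X) :
    CompletelyReducible G (GNHx X x) ↔ CompletelyReducible G (phiSet x) := by
  have hφH : phiSet x ⊆ GNHx X x := phi_subset_Hx hXcl hx
  constructor
  · intro hH lam hφP
    have hiP : ∀ i, x i ∈ Pset lam := fun i =>
      hφP (Subgroup.subset_closure (Set.mem_range_self i))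
    have hΛ : GNInLambda X x lam := InLambda_of_forall hXcl hXinv hx hiP
    have hHP : GNHx X x ⊆ Pset lam := fun g hg => hg.2 lam hΛ
    obtain ⟨L, hLev, hHL⟩ := hH lam hHP
    exact ⟨L, hLev, fun g hg => hHL (hφH hg)⟩
  · intro hφ lam hHP
    obtain ⟨L, hLev, hφL⟩ := hφ lam (fun g hg => hHP (hφH hg))
    obtain ⟨mu, hPmu, hLmu⟩ := hLev
    refine ⟨L, ⟨mu, hPmu, hLmu⟩, ?_⟩
    intro g hg
    have hxiL : ∀ i, x i ∈ Lset mu := by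
      intro i
      have h1 := hφL (Subgroup.subset_closure (Set.mem_range_self i))
      rwa [← hLmu] at h1
    have hcomm : ∀ (i : Fin N) (t : kˣ), mu.toFun t * x i = x i * mu.toFun t :=
      fun i t => commute_of_mem_Lset (hxiL i) t
    have hΛmu : GNInLambda X x mu := GNInLambda_of_commute hx hcomm
    have hcomm' : ∀ (i : Fin N) (t : kˣ),
        (invOnePS mu).toFun t * x i = x i * (invOnePS mu).toFun t := by
      intro i t
      show mu.toFun t⁻¹ * x i = x i * mu.toFun t⁻¹
      exact hcomm i t⁻¹
    have hΛmu' : GNInLambda X x (invOnePS mu) := GNInLambda_of_commute hx hcomm'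
    obtain ⟨hgG, h1, hh1G, q, hq, hq0⟩ := hg.2 mu hΛmu
    obtain ⟨-, h2, hh2G, r, hr, hr0⟩ := hg.2 (invOnePS mu) hΛmu'
    have key : ∀ ij : Fin G.n × Fin G.n, q ij = Polynomial.C ((q ij).coeff 0) := by
      intro ij
      apply poly_const_of_inv _ (r ij)
      intro t
      have h7 := hq t ij
      have h8 := hr t⁻¹ ij
      have h6 : (invOnePS mu).toFun t⁻¹ = mu.toFun t := by
        show mu.toFun t⁻¹⁻¹ = mu.toFun t
        rw [inv_inv]
      rw [h6] at h8
      rw [← h7, ← h8]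
    have hgL : g ∈ Lset mu := by
      refine ⟨hgG, hgG, q, hq, fun ij => ?_⟩
      have h9 := hq 1 ij
      rw [map_one, one_mul, inv_one, mul_one] at h9
      rw [key ij] at h9 ⊢
      rw [Polynomial.eval_C] at h9 ⊢
      exact h9
    rw [← hLmu]
    exact hgL

end PaperGIT
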